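/- Let t ↦ Q_t be a family of orthogonal projections on 𝔥 × 𝔥 differentiable at t₀, with each ran(Q_t) Lagrangian with respect to ω(f,g) = ⟨Jf, g⟩, J(f₁,f₂) = (f₂,−f₁). Then for every vector q ∈ ran(Q_{t₀}), the quantity ω(Q̇_{t₀} q, q) is real; indeed ω(q, Q̇_{t₀} q) equals its own complex conjugate. -/

import Mathlib

open scoped InnerProductSpace
open ContinuousLinearMap

/-- The operator `J(f₁,f₂) = (f₂, −f₁)` on `𝔥 ×₂ 𝔥`. -/
noncomputable def Jsymp (𝔥 : Type*)
    [NormedAddCommGroup 𝔥] [InnerProductSpace ℂ 𝔥] [CompleteSpace 𝔥] :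
    WithLp 2 (𝔥 × 𝔥) →L[ℂ] WithLp 2 (𝔥 × 𝔥) :=
  ((WithLp.prodContinuousLinearEquiv 2 ℂ 𝔥 𝔥).symm.toContinuousLinearMap) ∘L
    (((ContinuousLinearMap.snd ℂ 𝔥 𝔥).prod (-(ContinuousLinearMap.fst ℂ 𝔥 𝔥))) ∘L
      (WithLp.prodContinuousLinearEquiv 2 ℂ 𝔥 𝔥).toContinuousLinearMap)

/-- `J` is skew-adjoint: `⟪J f, g⟫ = -⟪f, J g⟫`. -/
lemma Jsymp_skew {𝔥 : Type*}
    [NormedAddCommGroup 𝔥] [InnerProductSpace ℂ 𝔥] [CompleteSpace 𝔥]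
    (f g : WithLp 2 (𝔥 × 𝔥)) :
    ⟪Jsymp 𝔥 f, g⟫_ℂ = -⟪f, Jsymp 𝔥 g⟫_ℂ := by
  simp only [Jsymp, ContinuousLinearMap.coe_comp', Function.comp_apply,
    ContinuousLinearEquiv.coe_coe, WithLp.prodContinuousLinearEquiv_apply,
    WithLp.prodContinuousLinearEquiv_symm_apply, ContinuousLinearMap.prod_apply,
    ContinuousLinearMap.coe_snd', ContinuousLinearMap.neg_apply,
    ContinuousLinearMap.coe_fst', WithLp.prod_inner_apply]
  simp only [WithLp.ofLp_fst, WithLp.ofLp_snd, WithLp.toLp_fst, WithLp.toLp_snd,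
    inner_neg_left, inner_neg_right]
  ring

set_option synthInstance.maxHeartbeats 1000000 in
set_option maxHeartbeats 1000000 in
/-- Let `t ↦ Q_t` be a family of orthogonal projections on `𝔥 × 𝔥`,
differentiable at `t₀`, with each `ran Q_t` Lagrangian for `ω(f,g) = ⟨Jf, g⟩`,
`J(f₁,f₂) = (f₂,−f₁)`.  Then for every `q ∈ ran Q_{t₀}` the quantity
`ω(q, Q̇_{t₀} q) = ⟨J q, Q̇_{t₀} q⟩` is real, i.e. it equals its own complex conjugate
(and hence `ω(Q̇_{t₀} q, q)` is real as well). -/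
theorem omega_derivative_projection_real
    {𝔥 : Type*} [NormedAddCommGroup 𝔥] [InnerProductSpace ℂ 𝔥] [CompleteSpace 𝔥]
    (Q : ℝ → (WithLp 2 (𝔥 × 𝔥) →L[ℂ] WithLp 2 (𝔥 × 𝔥)))
    (Q' : WithLp 2 (𝔥 × 𝔥) →L[ℂ] WithLp 2 (𝔥 × 𝔥))
    (t₀ : ℝ)
    (hsa : ∀ t, IsSelfAdjoint (Q t))
    (hidem : ∀ t, IsIdempotentElem (Q t))
    (hLagRange : ∀ t, ∀ p : WithLp 2 (𝔥 × 𝔥),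
      p ∈ LinearMap.range (Q t : WithLp 2 (𝔥 × 𝔥) →ₗ[ℂ] WithLp 2 (𝔥 × 𝔥)) ↔
        ∀ q ∈ LinearMap.range (Q t : WithLp 2 (𝔥 × 𝔥) →ₗ[ℂ] WithLp 2 (𝔥 × 𝔥)), ⟪Jsymp 𝔥 p, q⟫_ℂ = 0)
    (hJQ : ∀ t, Jsymp 𝔥 ∘L Q t + Q t ∘L Jsymp 𝔥 = Jsymp 𝔥)
    (hderiv : HasDerivAt Q Q' t₀) :
    ∀ q : WithLp 2 (𝔥 × 𝔥), Q t₀ q = q →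
      (starRingEnd ℂ) ⟪Jsymp 𝔥 q, Q' q⟫_ℂ = ⟪Jsymp 𝔥 q, Q' q⟫_ℂ ∧
        (starRingEnd ℂ) ⟪Jsymp 𝔥 (Q' q), q⟫_ℂ = ⟪Jsymp 𝔥 (Q' q), q⟫_ℂ := by
  set J : WithLp 2 (𝔥 × 𝔥) →L[ℂ] WithLp 2 (𝔥 × 𝔥) := Jsymp 𝔥 with hJdef
  -- real-linear restriction of the family
  have hR : HasDerivAt (fun t => (Q t).restrictScalars ℝ) (Q'.restrictScalars ℝ) t₀ := by
    have := (ContinuousLinearMap.restrictScalarsIsometry ℂ (WithLp 2 (𝔥 × 𝔥)) (WithLp 2 (𝔥 × 𝔥)) ℝ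
      ℝ).toContinuousLinearMap.hasFDerivAt.comp_hasDerivAt t₀ hderiv
    exact this
  -- pointwise derivative of `t ↦ Q t u`
  have happ : ∀ u : WithLp 2 (𝔥 × 𝔥), HasDerivAt (fun t => (Q t) u) (Q' u) t₀ := by
    intro u
    simpa using hR.clm_apply (hasDerivAt_const t₀ u)
  -- `J Q' + Q' J = 0` pointwise
  have hanti : ∀ u : WithLp 2 (𝔥 × 𝔥), Q' (J u) = -(J (Q' u)) := by
    intro u
    have h1 : HasDerivAt (fun t => J ((Q t) u) + (Q t) (J u))
        (J (Q' u) + Q' (J u)) t₀ := by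
      have hJu : HasDerivAt (fun t => J ((Q t) u)) (J (Q' u)) t₀ := by
        have := (J.restrictScalars ℝ).hasFDerivAt.comp_hasDerivAt t₀ (happ u)
        exact this
      exact hJu.add (happ (J u))
    have heq : (fun t => J ((Q t) u) + (Q t) (J u)) = fun _ => J u := by
      funext t
      have := congrArg (fun A : WithLp 2 (𝔥 × 𝔥) →L[ℂ] WithLp 2 (𝔥 × 𝔥) => A u) (hJQ t)
      simpa using this
    have h2 : HasDerivAt (fun t => J ((Q t) u) + (Q t) (J u)) 0 t₀ := by
      rw [heq]; exact hasDerivAt_const t₀ (J u)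
    have h0 : J (Q' u) + Q' (J u) = 0 := h1.unique h2
    rw [eq_neg_iff_add_eq_zero, add_comm]
    exact h0
  -- `Q'` is symmetric
  have hsym : ∀ x y : WithLp 2 (𝔥 × 𝔥), ⟪Q' x, y⟫_ℂ = ⟪x, Q' y⟫_ℂ := by
    intro x y
    have h1 : HasDerivAt (fun t => ⟪(Q t) x, y⟫_ℂ) ⟪Q' x, y⟫_ℂ t₀ := by
      simpa using (happ x).inner ℂ (hasDerivAt_const t₀ y)
    have h2 : HasDerivAt (fun t => ⟪x, (Q t) y⟫_ℂ) ⟪x, Q' y⟫_ℂ t₀ := by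
      simpa using (hasDerivAt_const t₀ x).inner ℂ (happ y)
    have heq : (fun t => ⟪(Q t) x, y⟫_ℂ) = fun t => ⟪x, (Q t) y⟫_ℂ := by
      funext t
      exact (hsa t).isSymmetric x y
    rw [heq] at h1
    exact h1.unique h2
  intro q _
  have key : (starRingEnd ℂ) ⟪J q, Q' q⟫_ℂ = ⟪J q, Q' q⟫_ℂ := by
    calc (starRingEnd ℂ) ⟪J q, Q' q⟫_ℂ = ⟪Q' q, J q⟫_ℂ := inner_conj_symm (Q' q) (J q)
      _ = ⟪q, Q' (J q)⟫_ℂ := hsym _ _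
      _ = -⟪q, J (Q' q)⟫_ℂ := by rw [hanti q, inner_neg_right]
      _ = ⟪J q, Q' q⟫_ℂ := (Jsymp_skew q (Q' q)).symm
  refine ⟨key, ?_⟩
  have h2 : ⟪J (Q' q), q⟫_ℂ = -⟪J q, Q' q⟫_ℂ := by
    rw [show ⟪J (Q' q), q⟫_ℂ = -⟪Q' q, J q⟫_ℂ from Jsymp_skew (Q' q) q,
      ← inner_conj_symm (Q' q) (J q), key]
  rw [h2, map_neg, key]
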